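/- arXiv:1408.3220 — 4 statements merged into one kernel-verified Lean document; each statement's English description precedes it below -/
import Mathlib

section
/- Let (Y_i)_{i∈ℕ} be an i.i.d. sequence of nonnegative real-valued random variables, let r > 0, and set M'_n := max_{1≤j≤n} Y_j. If E[(log⁺ Y_1)^r] = ∞, then for every constant c > 0, almost surely M'_n ≥ exp(c n^{1/r}) for infinitely many n ∈ ℕ. -/
open MeasureTheory Filter

/-- Corollary `maxcor` (b).
If `(Y i)` are i.i.d. nonnegative real random variables with `E[(log⁺ Y 1)^r] = ∞` for some
`r > 0`, and `M' n := max_{1 ≤ j ≤ n} Y j`, then for every `c > 0`, almost surely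
`M' n ≥ exp (c n^{1/r})` for infinitely many `n`. -/
theorem stmt4
    {Ω : Type*} [MeasurableSpace Ω] (P : Measure Ω) [IsProbabilityMeasure P]
    (Y : ℕ → Ω → ℝ)
    (hYmeas : ∀ i, Measurable (Y i))
    (hYnonneg : ∀ i ω, 0 ≤ Y i ω)
    (hYindep : ProbabilityTheory.iIndepFun Y P)
    (hYident : ∀ i, ProbabilityTheory.IdentDistrib (Y i) (Y 1) P P)
    (r : ℝ) (hr : 0 < r)
    (hinf : ∫⁻ ω, ENNReal.ofReal ((max (Real.log (Y 1 ω)) 0) ^ r) ∂P = ⊤)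
    (M : ℕ → Ω → ℝ)
    (hM : ∀ n, 1 ≤ n → ∀ ω, IsGreatest ((fun j => Y j ω) '' (Set.Icc 1 n)) (M n ω))
    (c : ℝ) (hc : 0 < c) :
    P {ω | ∃ᶠ (n : ℕ) in atTop, Real.exp (c * (n : ℝ) ^ (1 / r)) ≤ M n ω} = 1 := by
  classical
  set X : Ω → ℝ := fun ω => (max (Real.log (Y 1 ω)) 0) ^ r with hXdef
  have hXmeas : Measurable X :=
    (Real.continuous_rpow_const hr.le).measurable.comp
      ((Real.measurable_log.comp (hYmeas 1)).max measurable_const)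
  have hXnonneg : ∀ ω, 0 ≤ X ω := fun ω => Real.rpow_nonneg (le_max_right _ _) r
  set a : ℝ := c ^ r with hadef
  have hapos : 0 < a := Real.rpow_pos_of_pos hc r
  set A : ℕ → Set Ω := fun n => {ω | a * n ≤ X ω} with hAdef
  have hAmeas : ∀ n, MeasurableSet (A n) := fun n =>
    measurableSet_le measurable_const hXmeas
  -- Step 1 : divergence of ∑ P(A n)
  have hpt : ∀ ω, ENNReal.ofReal (X ω)
      ≤ ∑' n : ℕ, (A n).indicator (fun _ => ENNReal.ofReal a) ω := by
    intro ω
    set N := Nat.floor (X ω / a) with hNdef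
    have hind : ∀ n ∈ Finset.range (N + 1),
        (A n).indicator (fun _ => ENNReal.ofReal a) ω = ENNReal.ofReal a := by
      intro n hn
      have hn1 : (n : ℝ) ≤ N := by
        exact_mod_cast Nat.lt_succ_iff.mp (Finset.mem_range.mp hn)
      have hn2 : (n : ℝ) ≤ X ω / a :=
        hn1.trans (Nat.floor_le (div_nonneg (hXnonneg ω) hapos.le))
      have hmem : ω ∈ A n := by
        have := (le_div_iff₀ hapos).mp hn2
        simp only [hAdef, Set.mem_setOf_eq]
        linarith
      simp [Set.indicator_of_mem hmem]
    calc ENNReal.ofReal (X ω) ≤ ENNReal.ofReal (((N : ℝ) + 1) * a) := by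
          apply ENNReal.ofReal_le_ofReal
          have hlt : X ω / a < (N : ℝ) + 1 := Nat.lt_floor_add_one _
          have : X ω = (X ω / a) * a := (div_mul_cancel₀ _ hapos.ne').symm
          nlinarith
      _ = (N + 1 : ℕ) * ENNReal.ofReal a := by
          rw [show ((N : ℝ) + 1) = ((N + 1 : ℕ) : ℝ) by push_cast; ring,
            ENNReal.ofReal_mul (Nat.cast_nonneg _), ENNReal.ofReal_natCast]
      _ = ∑ n ∈ Finset.range (N + 1), ENNReal.ofReal a := by
          rw [Finset.sum_const, Finset.card_range, nsmul_eq_mul]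
      _ = ∑ n ∈ Finset.range (N + 1),
            (A n).indicator (fun _ => ENNReal.ofReal a) ω :=
          (Finset.sum_congr rfl hind).symm
      _ ≤ ∑' n : ℕ, (A n).indicator (fun _ => ENNReal.ofReal a) ω :=
          ENNReal.sum_le_tsum _
  have hsumA : ∑' n : ℕ, P (A n) = ⊤ := by
    have hlin : (⊤ : ENNReal) ≤ ENNReal.ofReal a * ∑' n : ℕ, P (A n) := by
      calc (⊤ : ENNReal) = ∫⁻ ω, ENNReal.ofReal (X ω) ∂P := hinf.symm
        _ ≤ ∫⁻ ω, ∑' n : ℕ, (A n).indicator (fun _ => ENNReal.ofReal a) ω ∂P :=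
            lintegral_mono hpt
        _ = ∑' n : ℕ, ∫⁻ ω, (A n).indicator (fun _ => ENNReal.ofReal a) ω ∂P :=
            lintegral_tsum fun n =>
              (measurable_const.indicator (hAmeas n)).aemeasurable
        _ = ∑' n : ℕ, ENNReal.ofReal a * P (A n) := by
            refine tsum_congr fun n => ?_
            rw [lintegral_indicator_const (hAmeas n)]
        _ = ENNReal.ofReal a * ∑' n : ℕ, P (A n) := ENNReal.tsum_mul_left
    have hprod : ENNReal.ofReal a * ∑' n : ℕ, P (A n) = ⊤ := top_le_iff.mp hlin
    rcases ENNReal.mul_eq_top.mp hprod with ⟨_, h⟩ | ⟨h, _⟩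
    · exact h
    · exact absurd h ENNReal.ofReal_ne_top
  -- Step 2 : identification of the events
  set t : ℕ → ℝ := fun n => Real.exp (c * (n : ℝ) ^ (1 / r)) with htdef
  have hAeq : ∀ n : ℕ, 1 ≤ n → A n = Y 1 ⁻¹' Set.Ici (t n) := by
    intro n hn
    have hnpos : (0 : ℝ) < n := by exact_mod_cast hn
    have hbpos : 0 < c * (n : ℝ) ^ (1 / r) :=
      mul_pos hc (Real.rpow_pos_of_pos hnpos _)
    have han : a * n = (c * (n : ℝ) ^ (1 / r)) ^ r := by
      rw [Real.mul_rpow hc.le (Real.rpow_nonneg hnpos.le _),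
        ← Real.rpow_mul hnpos.le, one_div_mul_cancel hr.ne', Real.rpow_one]
    ext ω
    simp only [hAdef, Set.mem_setOf_eq, Set.mem_preimage, Set.mem_Ici, htdef]
    rw [hXdef]
    rw [han, Real.rpow_le_rpow_iff hbpos.le (le_max_right _ _) hr]
    constructor
    · intro h
      have hlog : c * (n : ℝ) ^ (1 / r) ≤ Real.log (Y 1 ω) := by
        rcases le_max_iff.mp h with h' | h'
        · exact h'
        · linarith
      rcases (hYnonneg 1 ω).eq_or_lt with hy | hy
      · rw [← hy, Real.log_zero] at hlog; linarith
      · exact (Real.le_log_iff_exp_le hy).mp hlog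
    · intro h
      have hy : 0 < Y 1 ω := lt_of_lt_of_le (Real.exp_pos _) h
      exact le_max_of_le_left ((Real.le_log_iff_exp_le hy).mpr h)
  -- Step 3 : Borel–Cantelli events
  set s : ℕ → Set Ω := fun n => Y n ⁻¹' Set.Ici (t n) with hsdef
  have hsmeas : ∀ n, MeasurableSet (s n) := fun n => hYmeas n measurableSet_Ici
  have hindep : ProbabilityTheory.iIndepSet s P := by
    rw [ProbabilityTheory.iIndepSet_iff_meas_biInter hsmeas]
    intro S
    exact hYindep.measure_inter_preimage_eq_mul S
      (sets := fun i => Set.Ici (t i)) fun i _ => measurableSet_Ici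
  have hPs : ∀ n : ℕ, 1 ≤ n → P (s n) = P (A n) := by
    intro n hn
    rw [hAeq n hn]
    exact (hYident n).measure_mem_eq measurableSet_Ici
  have hsum_s : ∑' n : ℕ, P (s n) = ⊤ := by
    have htail : ∑' n : ℕ, P (A (n + 1)) = ⊤ :=
      ENNReal.tsum_add_one_eq_top hsumA (measure_ne_top P _)
    have htail' : ∑' n : ℕ, P (s (n + 1)) = ⊤ := by
      rw [tsum_congr fun n => hPs (n + 1) (Nat.succ_le_succ (Nat.zero_le n))]
      exact htail
    rw [tsum_eq_zero_add' (f := fun n => P (s n)) ENNReal.summable, htail']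
    simp
  have hlim : P (limsup s atTop) = 1 :=
    ProbabilityTheory.measure_limsup_eq_one hsmeas hindep hsum_s
  -- Step 4 : conclusion
  have hsub : limsup s atTop
      ⊆ {ω | ∃ᶠ (n : ℕ) in atTop, Real.exp (c * (n : ℝ) ^ (1 / r)) ≤ M n ω} := by
    intro ω hω
    have hfreq : ∃ᶠ n in atTop, ω ∈ s n := mem_limsup_iff_frequently_mem.mp hω
    refine (hfreq.and_eventually (eventually_ge_atTop 1)).mono ?_
    rintro n ⟨hmem, hn⟩
    have hY_le_M : Y n ω ≤ M n ω :=
      (hM n hn ω).2 ⟨n, ⟨hn, le_rfl⟩, rfl⟩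
    exact le_trans hmem hY_le_M
  exact le_antisymm prob_le_one (hlim ▸ measure_mono hsub)
end

section
/- Let (Y_i)_{i∈ℕ} be an i.i.d. sequence of nonnegative real-valued random variables with E[(log⁺ Y_1)^r] = ∞ for some r > 0, and set M'_n := max_{1≤j≤n} Y_j. Then for every constant c > 0 and every non-decreasing sequence (s_i)_{i∈ℕ} of positive integers with lim_{i→∞} s_i = ∞ and inf_{i≥2} s_{i−1}/s_i > 0, almost surely M'_{s_i} ≥ exp(c s_i^{1/r}) for infinitely many i ∈ ℕ. -/
set_option maxHeartbeats 1000000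


open MeasureTheory Filter
open scoped ENNReal

lemma my_lintegral_le_tsum_meas {Ω : Type*} [MeasurableSpace Ω] (P : Measure Ω)
    (f : Ω → ℝ≥0∞) (hf : Measurable f) :
    ∫⁻ ω, f ω ∂P ≤ ∑' n : ℕ, P {ω | (n : ℝ≥0∞) ≤ f ω} := by
  have hmeas : ∀ n : ℕ, MeasurableSet {ω | (n : ℝ≥0∞) ≤ f ω} := fun n =>
    hf measurableSet_Ici
  have h1 : ∀ ω, f ω ≤ ∑' n : ℕ,
      Set.indicator {ω | (n : ℝ≥0∞) ≤ f ω} (fun _ => (1 : ℝ≥0∞)) ω := by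
    intro ω
    by_cases hfin : f ω = ∞
    · have : ∀ n : ℕ, Set.indicator {ω | (n : ℝ≥0∞) ≤ f ω} (fun _ => (1 : ℝ≥0∞)) ω = 1 := by
        intro n
        rw [Set.indicator_of_mem]
        exact (hfin ▸ le_top : (n : ℝ≥0∞) ≤ f ω)
      rw [hfin]
      simp only [this]
      rw [ENNReal.tsum_const_eq_top_of_ne_zero one_ne_zero]
    · set k : ℕ := Nat.floor (f ω).toReal with hk
      have hle : f ω ≤ ((k + 1 : ℕ) : ℝ≥0∞) := by
        have hlt : (f ω).toReal ≤ ((k + 1 : ℕ) : ℝ) := by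
          push_cast
          exact (Nat.lt_floor_add_one _).le
        have h := ENNReal.ofReal_le_ofReal hlt
        rwa [ENNReal.ofReal_toReal hfin, ENNReal.ofReal_natCast] at h
      refine hle.trans ?_
      have h2 : ∀ n ∈ Finset.range (k + 1),
          Set.indicator {ω | (n : ℝ≥0∞) ≤ f ω} (fun _ => (1 : ℝ≥0∞)) ω = 1 := by
        intro n hn
        rw [Finset.mem_range, Nat.lt_succ_iff] at hn
        have h0 : (n : ℝ) ≤ (f ω).toReal :=
          le_trans (Nat.cast_le.mpr hn) (Nat.floor_le ENNReal.toReal_nonneg)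
        have h := ENNReal.ofReal_le_ofReal h0
        rw [ENNReal.ofReal_toReal hfin, ENNReal.ofReal_natCast] at h
        have hmem : ω ∈ {ω | (n : ℝ≥0∞) ≤ f ω} := h
        exact Set.indicator_of_mem hmem (fun _ => (1 : ℝ≥0∞))
      calc ((k + 1 : ℕ) : ℝ≥0∞)
          = ∑ n ∈ Finset.range (k + 1), (1 : ℝ≥0∞) := by simp
        _ = ∑ n ∈ Finset.range (k + 1),
            Set.indicator {ω | (n : ℝ≥0∞) ≤ f ω} (fun _ => (1 : ℝ≥0∞)) ω :=
            (Finset.sum_congr rfl fun n hn => (h2 n hn).symm)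
        _ ≤ ∑' n : ℕ, Set.indicator {ω | (n : ℝ≥0∞) ≤ f ω} (fun _ => (1 : ℝ≥0∞)) ω :=
            ENNReal.sum_le_tsum _
  calc ∫⁻ ω, f ω ∂P
      ≤ ∫⁻ ω, ∑' n : ℕ, Set.indicator {ω | (n : ℝ≥0∞) ≤ f ω} (fun _ => (1 : ℝ≥0∞)) ω ∂P :=
        lintegral_mono h1
    _ = ∑' n : ℕ, ∫⁻ ω, Set.indicator {ω | (n : ℝ≥0∞) ≤ f ω} (fun _ => (1 : ℝ≥0∞)) ω ∂P :=
        lintegral_tsum fun n => (measurable_const.indicator (hmeas n)).aemeasurable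
    _ = ∑' n : ℕ, P {ω | (n : ℝ≥0∞) ≤ f ω} := by
        refine tsum_congr fun n => ?_
        rw [lintegral_indicator_const (hmeas n), one_mul]

/-- Corollary `maxcor` (c).
If `(Y i)` are i.i.d. nonnegative real random variables with `E[(log⁺ Y 1)^r] = ∞` for some
`r > 0`, and `M' n := max_{1 ≤ j ≤ n} Y j`, then for every `c > 0` and every non-decreasing
sequence `(s i)` of positive integers with `s i → ∞` and `inf_{i ≥ 2} s (i-1) / s i > 0`,
almost surely `M'_{s i} ≥ exp (c (s i)^{1/r})` for infinitely many `i`. -/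
theorem stmt5
    {Ω : Type*} [MeasurableSpace Ω] (P : Measure Ω) [IsProbabilityMeasure P]
    (Y : ℕ → Ω → ℝ)
    (hYmeas : ∀ i, Measurable (Y i))
    (hYnonneg : ∀ i ω, 0 ≤ Y i ω)
    (hYindep : ProbabilityTheory.iIndepFun Y P)
    (hYident : ∀ i, ProbabilityTheory.IdentDistrib (Y i) (Y 1) P P)
    (r : ℝ) (hr : 0 < r)
    (hinf : ∫⁻ ω, ENNReal.ofReal ((max (Real.log (Y 1 ω)) 0) ^ r) ∂P = ⊤)
    (M : ℕ → Ω → ℝ)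
    (hM : ∀ n, 1 ≤ n → ∀ ω, IsGreatest ((fun j => Y j ω) '' (Set.Icc 1 n)) (M n ω))
    (c : ℝ) (hc : 0 < c)
    (s : ℕ → ℕ)
    (hs_pos : ∀ i, 1 ≤ i → 0 < s i)
    (hs_mono : ∀ i j, 1 ≤ i → i ≤ j → s i ≤ s j)
    (hs_tendsto : Tendsto s atTop atTop)
    (hs_ratio : ∃ δ : ℝ, 0 < δ ∧ ∀ i, 2 ≤ i → δ ≤ (s (i - 1) : ℝ) / (s i : ℝ)) :
    P {ω | ∃ᶠ (i : ℕ) in atTop,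
        Real.exp (c * (s i : ℝ) ^ (1 / r)) ≤ M (s i) ω} = 1 := by
  classical
  obtain ⟨δ, hδ, hratio⟩ := hs_ratio
  set c' : ℝ := c / δ ^ (1 / r) with hc'def
  have hδr : 0 < δ ^ (1 / r) := Real.rpow_pos_of_pos hδ _
  have hc' : 0 < c' := div_pos hc hδr
  set a : ℝ := c' ^ r with hadef
  have ha : 0 < a := Real.rpow_pos_of_pos hc' _
  -- events
  set A : ℕ → Set Ω := fun n => Y n ⁻¹' Set.Ici (Real.exp (c' * (n : ℝ) ^ (1 / r))) with hAdef
  have hAmeas : ∀ n, MeasurableSet (A n) := fun n => (hYmeas n) measurableSet_Ici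
  -- the auxiliary function
  set g : Ω → ℝ≥0∞ := fun ω => ENNReal.ofReal ((max (Real.log (Y 1 ω)) 0) ^ r / a) with hgdef
  have hgmeas : Measurable g := by
    apply ENNReal.measurable_ofReal.comp
    exact ((Real.continuous_rpow_const hr.le).measurable.comp
      ((Real.measurable_log.comp (hYmeas 1)).max measurable_const)).div_const a
  -- ∫ g = ∞
  have hgint : ∫⁻ ω, g ω ∂P = ⊤ := by
    have : ∀ ω, g ω = ENNReal.ofReal ((max (Real.log (Y 1 ω)) 0) ^ r) * ENNReal.ofReal a⁻¹ := by
      intro ω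
      simp only [hgdef]
      rw [div_eq_mul_inv, ENNReal.ofReal_mul (Real.rpow_nonneg (le_max_right _ _) r)]
    simp only [hgdef]
    calc ∫⁻ ω, ENNReal.ofReal ((max (Real.log (Y 1 ω)) 0) ^ r / a) ∂P
        = ∫⁻ ω, ENNReal.ofReal ((max (Real.log (Y 1 ω)) 0) ^ r) * ENNReal.ofReal a⁻¹ ∂P := by
          exact lintegral_congr this
      _ = (∫⁻ ω, ENNReal.ofReal ((max (Real.log (Y 1 ω)) 0) ^ r) ∂P) * ENNReal.ofReal a⁻¹ :=
          lintegral_mul_const _ (ENNReal.measurable_ofReal.comp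
            ((Real.continuous_rpow_const hr.le).measurable.comp
              ((Real.measurable_log.comp (hYmeas 1)).max measurable_const)))
      _ = ⊤ := by
          rw [hinf, ENNReal.top_mul]
          simp only [ne_eq, ENNReal.ofReal_eq_zero, not_le]
          exact inv_pos.mpr ha
  -- tail sets included in events
  have hsub : ∀ n : ℕ, 1 ≤ n →
      {ω | (n : ℝ≥0∞) ≤ g ω} ⊆ Y 1 ⁻¹' Set.Ici (Real.exp (c' * (n : ℝ) ^ (1 / r))) := by
    intro n hn ω hω
    simp only [Set.mem_setOf_eq, hgdef] at hω
    have hx : (0 : ℝ) ≤ max (Real.log (Y 1 ω)) 0 := le_max_right _ _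
    have h1 : (n : ℝ) ≤ (max (Real.log (Y 1 ω)) 0) ^ r / a :=
      (ENNReal.natCast_le_ofReal (by omega)).mp hω
    have h2 : (n : ℝ) * a ≤ (max (Real.log (Y 1 ω)) 0) ^ r := by
      rw [← le_div_iff₀ ha]; exact h1
    have h3 : ((n : ℝ) * a) ^ (1 / r) ≤ max (Real.log (Y 1 ω)) 0 := by
      have := Real.rpow_le_rpow (by positivity) h2 (by positivity : (0:ℝ) ≤ 1 / r)
      rwa [← Real.rpow_mul hx, mul_one_div_cancel hr.ne', Real.rpow_one] at this
    have h4 : ((n : ℝ) * a) ^ (1 / r) = a ^ (1 / r) * (n : ℝ) ^ (1 / r) := by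
      rw [mul_comm, Real.mul_rpow ha.le (Nat.cast_nonneg n)]
    have h5 : a ^ (1 / r) = c' := by
      rw [hadef, ← Real.rpow_mul hc'.le, mul_one_div_cancel hr.ne', Real.rpow_one]
    rw [h4, h5] at h3
    have hnr : (0 : ℝ) < (n : ℝ) ^ (1 / r) :=
      Real.rpow_pos_of_pos (by exact_mod_cast hn) _
    have ht : 0 < c' * (n : ℝ) ^ (1 / r) := mul_pos hc' hnr
    have hlog : c' * (n : ℝ) ^ (1 / r) ≤ Real.log (Y 1 ω) := by
      rcases le_max_iff.mp h3 with h | h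
      · exact h
      · linarith
    have hYpos : 0 < Y 1 ω := by
      rcases (hYnonneg 1 ω).lt_or_eq with h | h
      · exact h
      · exfalso; rw [← h, Real.log_zero] at hlog; linarith
    have := Real.exp_le_exp.mpr hlog
    rwa [Real.exp_log hYpos] at this
  -- ∑ P (A n) = ∞
  have hsum : ∑' n : ℕ, P (A n) = ⊤ := by
    have hAident : ∀ n : ℕ, P (A n) = P (Y 1 ⁻¹' Set.Ici (Real.exp (c' * (n : ℝ) ^ (1 / r)))) :=
      fun n => (hYident n).measure_mem_eq measurableSet_Ici
    by_contra hne
    have hfin : ∑' n : ℕ, P (A n) ≠ ⊤ := hne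
    have key : ∑' n : ℕ, P {ω | (n : ℝ≥0∞) ≤ g ω} = ⊤ :=
      top_unique (hgint ▸ my_lintegral_le_tsum_meas P g hgmeas)
    have htop : (⊤ : ℝ≥0∞) ≤ 1 + ∑' n : ℕ, P (A n) := by
      rw [← key, ENNReal.tsum_eq_add_tsum_ite 0]
      refine add_le_add prob_le_one (ENNReal.tsum_le_tsum fun n => ?_)
      split_ifs with hn
      · exact zero_le
      · rw [hAident n]
        exact measure_mono (hsub n (Nat.one_le_iff_ne_zero.mpr hn))
    rw [top_le_iff] at htop
    exact hfin (by simpa [ENNReal.add_eq_top] using htop)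
  -- independence of the events
  have hAind : ProbabilityTheory.iIndepSet A P := by
    rw [ProbabilityTheory.iIndepSet_iff_iIndep]
    have h := hYindep.iIndep
    rw [ProbabilityTheory.iIndep_iff] at h ⊢
    intro t f hf
    refine h t ?_
    intro i hi
    refine MeasurableSpace.generateFrom_le ?_ _ (hf i hi)
    rintro u hu
    rw [Set.mem_singleton_iff] at hu
    subst hu
    exact ⟨Set.Ici _, measurableSet_Ici, rfl⟩
  -- second Borel-Cantelli
  have hlimsup : P (limsup A atTop) = 1 :=
    ProbabilityTheory.measure_limsup_eq_one hAmeas hAind hsum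
  -- inclusion of limsup in the target event
  have hincl : limsup A atTop ⊆
      {ω | ∃ᶠ (i : ℕ) in atTop, Real.exp (c * (s i : ℝ) ^ (1 / r)) ≤ M (s i) ω} := by
    intro ω hω
    rw [Filter.mem_limsup_iff_frequently_mem] at hω
    rw [Set.mem_setOf_eq, frequently_atTop]
    intro N
    set N' : ℕ := max N 1 with hN'
    obtain ⟨n, hn1, hn2⟩ := (frequently_atTop.mp hω) (s N' + 1)
    have hnpos : 1 ≤ n := le_trans (Nat.succ_le_succ (Nat.zero_le _)) hn1
    have hnsN' : s N' < n := hn1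
    simp only [hAdef, Set.mem_preimage, Set.mem_Ici] at hn2
    -- find minimal i ≥ 1 with n ≤ s i
    have hex : ∃ i : ℕ, 1 ≤ i ∧ n ≤ s i := by
      obtain ⟨i, hi⟩ := (hs_tendsto.eventually_ge_atTop n).exists_forall_of_atTop
      exact ⟨max i 1, le_max_right _ _, hi _ (le_max_left _ _)⟩
    obtain ⟨i, hi1, hins, hmin⟩ : ∃ i, 1 ≤ i ∧ n ≤ s i ∧ ∀ j, j < i → ¬(1 ≤ j ∧ n ≤ s j) :=
      ⟨Nat.find hex, (Nat.find_spec hex).1, (Nat.find_spec hex).2,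
        fun j hj => Nat.find_min hex hj⟩
    -- i > N'
    have hiN' : N' < i := by
      by_contra hcon
      push_neg at hcon
      have : s i ≤ s N' := hs_mono i N' hi1 hcon
      omega
    have hi2 : 2 ≤ i := by
      have : 1 ≤ N' := le_max_right _ _
      omega
    have hprev : s (i - 1) < n := by
      have h := hmin (i - 1) (by omega)
      push_neg at h
      exact h (by omega)
    -- key inequality
    have hsi_pos : 0 < s i := hs_pos i hi1
    have hδsi : δ * (s i : ℝ) ≤ (n : ℝ) := by
      have h1 : δ ≤ (s (i - 1) : ℝ) / (s i : ℝ) := hratio i hi2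
      have h2 : δ * (s i : ℝ) ≤ (s (i - 1) : ℝ) := by
        rw [← le_div_iff₀ (by exact_mod_cast hsi_pos)]; exact h1
      have h3 : (s (i - 1) : ℝ) ≤ (n : ℝ) := by exact_mod_cast hprev.le
      linarith
    have hkey : c * (s i : ℝ) ^ (1 / r) ≤ c' * (n : ℝ) ^ (1 / r) := by
      have h1 : (δ * (s i : ℝ)) ^ (1 / r) ≤ (n : ℝ) ^ (1 / r) :=
        Real.rpow_le_rpow (by positivity) hδsi (by positivity)
      have h2 : (δ * (s i : ℝ)) ^ (1 / r) = δ ^ (1 / r) * (s i : ℝ) ^ (1 / r) :=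
        Real.mul_rpow hδ.le (Nat.cast_nonneg _)
      have h3 : c' * (δ ^ (1 / r) * (s i : ℝ) ^ (1 / r)) = c * (s i : ℝ) ^ (1 / r) := by
        have hne : δ ^ (1 / r) ≠ 0 := ne_of_gt hδr
        rw [hc'def]
        field_simp
      calc c * (s i : ℝ) ^ (1 / r) = c' * ((δ * (s i : ℝ)) ^ (1 / r)) := by rw [h2, h3]
        _ ≤ c' * ((n : ℝ) ^ (1 / r)) := by
            exact mul_le_mul_of_nonneg_left h1 hc'.le
    refine ⟨i, by omega, ?_⟩
    have hYM : Y n ω ≤ M (s i) ω :=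
      (hM (s i) hsi_pos ω).2 ⟨n, ⟨hnpos, hins⟩, rfl⟩
    calc Real.exp (c * (s i : ℝ) ^ (1 / r))
        ≤ Real.exp (c' * (n : ℝ) ^ (1 / r)) := Real.exp_le_exp.mpr hkey
      _ ≤ Y n ω := hn2
      _ ≤ M (s i) ω := hYM
  -- conclude
  refine le_antisymm prob_le_one ?_
  calc (1 : ℝ≥0∞) = P (limsup A atTop) := hlimsup.symm
    _ ≤ P _ := measure_mono hincl
end

section
/- Let r > 0 be a finite constant, let J be a countably infinite index set and let (Y_j)_{j∈J} be i.i.d. nonnegative real-valued random variables with E[(log⁺ Y_j)^r] = ∞. Let (L_i)_{i∈ℕ} be a sequence of pairwise disjoint finite subsets of J such that |L_i| ≥ c₂ β^{c₃ i} for each i ∈ ℕ, where c₂ > 0, c₃ > 0 and β > 1 are constants. Define M_i := max_{j∈L_i} Y_j. Then for every finite constant c > 0, P(M_i ≥ exp(c β^{c₃ i / r}) for infinitely many i ∈ ℕ) = 1. -/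
open MeasureTheory Filter
open scoped ENNReal

/-- Lemma `ml`.
Let `r > 0`, `J` a countably infinite index set, `(Y j)_{j ∈ J}` i.i.d. nonnegative real
random variables with `E[(log⁺ Y j)^r] = ∞`, and `(L i)` pairwise disjoint finite subsets of
`J` with `|L i| ≥ c₂ β^{c₃ i}` for constants `c₂, c₃ > 0`, `β > 1`.  With
`M i := max_{j ∈ L i} Y j`, for every `c > 0` we have
`P(M i ≥ exp (c β^{c₃ i / r}) for infinitely many i) = 1`. -/
theorem stmt6
    {Ω : Type*} [MeasurableSpace Ω] (P : Measure Ω) [IsProbabilityMeasure P]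
    {J : Type*} [Countable J] [Infinite J]
    (Y : J → Ω → ℝ)
    (hYmeas : ∀ j, Measurable (Y j))
    (hYnonneg : ∀ j ω, 0 ≤ Y j ω)
    (hYindep : ProbabilityTheory.iIndepFun Y P)
    (hYident : ∀ j j', ProbabilityTheory.IdentDistrib (Y j) (Y j') P P)
    (r : ℝ) (hr : 0 < r)
    (hinf : ∀ j, ∫⁻ ω, ENNReal.ofReal ((max (Real.log (Y j ω)) 0) ^ r) ∂P = ⊤)
    (c₂ c₃ β : ℝ) (hc₂ : 0 < c₂) (hc₃ : 0 < c₃) (hβ : 1 < β)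
    (L : ℕ → Finset J)
    (hL_disj : ∀ i i', i ≠ i' → Disjoint (L i) (L i'))
    (hL_card : ∀ i : ℕ, 1 ≤ i → c₂ * β ^ (c₃ * (i : ℝ)) ≤ ((L i).card : ℝ))
    (M : ℕ → Ω → ℝ)
    (hM : ∀ i, 1 ≤ i → ∀ ω, IsGreatest ((fun j => Y j ω) '' (L i : Set J)) (M i ω))
    (c : ℝ) (hc : 0 < c) :
    P {ω | ∃ᶠ (i : ℕ) in atTop,
        Real.exp (c * β ^ (c₃ * (i : ℝ) / r)) ≤ M i ω} = 1 := by
  classical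
  have hβ0 : (0:ℝ) < β := lt_trans one_pos hβ
  set t : ℕ → ℝ := fun i => Real.exp (c * β ^ (c₃ * (i : ℝ) / r)) with ht
  set A : ℕ → ℝ := fun i => c ^ r * β ^ (c₃ * (i : ℝ)) with hA
  have hApos : ∀ i, 0 < A i := fun i =>
    mul_pos (Real.rpow_pos_of_pos hc r) (Real.rpow_pos_of_pos hβ0 _)
  have hAmono : Monotone A := by
    intro i i' hii'
    refine mul_le_mul_of_nonneg_left ?_ (Real.rpow_nonneg hc.le r)
    exact (Real.rpow_le_rpow_left_iff hβ).2
      (mul_le_mul_of_nonneg_left (by exact_mod_cast hii') hc₃.le)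
  have hAs : ∀ i : ℕ, (c * β ^ (c₃ * (i:ℝ) / r)) ^ r = A i := by
    intro i
    rw [hA, Real.mul_rpow hc.le (Real.rpow_nonneg hβ0.le _), ← Real.rpow_mul hβ0.le,
      div_mul_cancel₀ _ hr.ne']
  -- event equivalence
  have hev : ∀ (j : J) (i : ℕ) (ω : Ω),
      t i ≤ Y j ω ↔ A i ≤ (max (Real.log (Y j ω)) 0) ^ r := by
    intro j i ω
    have hs : 0 < c * β ^ (c₃ * (i:ℝ) / r) := mul_pos hc (Real.rpow_pos_of_pos hβ0 _)
    set s := c * β ^ (c₃ * (i:ℝ) / r) with hsdef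
    have h1 : t i ≤ Y j ω ↔ s ≤ max (Real.log (Y j ω)) 0 := by
      constructor
      · intro h
        have hy : 0 < Y j ω := lt_of_lt_of_le (Real.exp_pos _) h
        exact le_max_of_le_left ((Real.le_log_iff_exp_le hy).2 h)
      · intro h
        have hy : 0 < Y j ω := by
          rcases lt_or_eq_of_le (hYnonneg j ω) with h' | h'
          · exact h'
          · exfalso
            rw [← h', Real.log_zero, max_self] at h
            exact absurd (lt_of_lt_of_le hs h) (lt_irrefl 0)
        have hlog : s ≤ Real.log (Y j ω) := by
          rcases max_cases (Real.log (Y j ω)) 0 with ⟨he, _⟩ | ⟨he, hle⟩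
          · rwa [he] at h
          · rw [he] at h; linarith
        exact (Real.le_log_iff_exp_le hy).1 hlog
    have h2 : s ≤ max (Real.log (Y j ω)) 0 ↔ s ^ r ≤ (max (Real.log (Y j ω)) 0) ^ r := by
      constructor
      · intro h; exact Real.rpow_le_rpow hs.le h hr.le
      · intro h
        by_contra hlt
        push_neg at hlt
        exact absurd h (not_le.2 (Real.rpow_lt_rpow (le_max_right _ _) hlt hr))
    rw [h1, h2, hAs i]
  -- fix a reference variable
  have : Nonempty J := inferInstance
  set j₀ : J := Classical.arbitrary J with hj₀
  set Z : Ω → ℝ := fun ω => (max (Real.log (Y j₀ ω)) 0) ^ r with hZ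
  have hZmeas : Measurable Z := by
    have h1 : Measurable fun ω => max (Real.log (Y j₀ ω)) 0 :=
      ((hYmeas j₀).log).max measurable_const
    exact (Real.continuous_rpow_const hr.le).measurable.comp h1
  have hZnonneg : ∀ ω, 0 ≤ Z ω := fun ω => Real.rpow_nonneg (le_max_right _ _) r
  have hZsetmeas : ∀ i : ℕ, MeasurableSet {ω | A i ≤ Z ω} :=
    fun i => measurableSet_le measurable_const hZmeas
  set q : ℕ → ℝ≥0∞ := fun i => P {ω | A i ≤ Z ω} with hqdef
  -- A tends to infinity
  have hAtop : Tendsto A atTop atTop := by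
    have h1 : (1:ℝ) < β ^ c₃ :=
      Real.one_lt_rpow_iff_of_pos hβ0 |>.2 (Or.inl ⟨hβ, hc₃⟩)
    have h2 : Tendsto (fun i : ℕ => (β ^ c₃) ^ i) atTop atTop :=
      tendsto_pow_atTop_atTop_of_one_lt h1
    have h3 : A = fun i : ℕ => c ^ r * (β ^ c₃) ^ i := by
      funext i
      show c ^ r * β ^ (c₃ * (i:ℝ)) = c ^ r * (β ^ c₃) ^ i
      congr 1
      rw [Real.rpow_mul hβ0.le, Real.rpow_natCast]
    rw [h3]
    exact h2.const_mul_atTop (Real.rpow_pos_of_pos hc r)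
  -- pointwise bound
  have hpt : ∀ ω, ENNReal.ofReal (Z ω) ≤ ENNReal.ofReal (A 1) +
      ∑' i : ℕ, Set.indicator {ω | A (i+1) ≤ Z ω}
        (fun _ => ENNReal.ofReal (A (i+2) - A (i+1))) ω := by
    intro ω
    by_cases hz : Z ω < A 1
    · exact le_trans (ENNReal.ofReal_le_ofReal hz.le) le_self_add
    · push_neg at hz
      have hex : ∃ n, Z ω < A n := (hAtop.eventually_gt_atTop (Z ω)).exists
      set m := Nat.find hex with hm
      have hmlt : Z ω < A m := Nat.find_spec hex
      have hm1 : 1 < m := by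
        by_contra hcon
        push_neg at hcon
        exact absurd (lt_of_le_of_lt hz (lt_of_lt_of_le hmlt (hAmono hcon))) (lt_irrefl _)
      set k := m - 1 with hk
      have hmk : m = k + 1 := by omega
      have hkA : A k ≤ Z ω := not_lt.1 (Nat.find_min hex (by omega))
      have hsum_eq : ∑ i ∈ Finset.range k, (A (i+2) - A (i+1)) = A (k+1) - A 1 := by
        have := Finset.sum_range_sub (fun i => A (i+1)) k
        simpa using this
      calc ENNReal.ofReal (Z ω) ≤ ENNReal.ofReal (A (k+1)) :=
            ENNReal.ofReal_le_ofReal (by rw [← hmk]; exact hmlt.le)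
        _ = ENNReal.ofReal (A 1 + (A (k+1) - A 1)) := by ring_nf
        _ = ENNReal.ofReal (A 1) + ENNReal.ofReal (A (k+1) - A 1) := by
            rw [ENNReal.ofReal_add (hApos 1).le (by
              have : A 1 ≤ A (k+1) := hAmono (by omega)
              linarith)]
        _ ≤ _ := by
            refine add_le_add_right ?_ _
            rw [← hsum_eq, ENNReal.ofReal_sum_of_nonneg (fun i _ => by
              have : A (i+1) ≤ A (i+2) := hAmono (by omega)
              linarith)]
            have hterm : ∀ i ∈ Finset.range k,
                ENNReal.ofReal (A (i+2) - A (i+1)) =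
                Set.indicator {ω | A (i+1) ≤ Z ω}
                  (fun _ => ENNReal.ofReal (A (i+2) - A (i+1))) ω := by
              intro i hi
              rw [Set.indicator_of_mem]
              exact Set.mem_setOf_eq ▸ le_trans (hAmono (by
                simp only [Finset.mem_range] at hi; omega)) hkA
            rw [Finset.sum_congr rfl hterm]
            exact ENNReal.sum_le_tsum _
  -- divergence of the weighted sum
  have hdiv : ∑' i : ℕ, ENNReal.ofReal (A (i+1)) * q (i+1) = ⊤ := by
    have hint : ∫⁻ ω, (ENNReal.ofReal (A 1) +
        ∑' i : ℕ, Set.indicator {ω | A (i+1) ≤ Z ω}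
          (fun _ => ENNReal.ofReal (A (i+2) - A (i+1))) ω) ∂P =
        ENNReal.ofReal (A 1) +
        ∑' i : ℕ, ENNReal.ofReal (A (i+2) - A (i+1)) * q (i+1) := by
      rw [lintegral_add_left measurable_const, lintegral_const, measure_univ, mul_one,
        lintegral_tsum (fun i => (measurable_const.indicator (hZsetmeas (i+1))).aemeasurable)]
      congr 1
      exact tsum_congr fun i => lintegral_indicator_const (hZsetmeas (i+1)) _
    have htop : ENNReal.ofReal (A 1) +
        ∑' i : ℕ, ENNReal.ofReal (A (i+2) - A (i+1)) * q (i+1) = ⊤ := by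
      rw [← hint]
      refine top_le_iff.1 ?_
      rw [← hinf j₀]
      exact lintegral_mono hpt
    have hsum2 : ∑' i : ℕ, ENNReal.ofReal (A (i+2) - A (i+1)) * q (i+1) = ⊤ := by
      rcases ENNReal.add_eq_top.1 htop with h | h
      · exact absurd h ENNReal.ofReal_ne_top
      · exact h
    -- compare termwise
    have hstep : ∀ i : ℕ, A (i+2) = β ^ c₃ * A (i+1) := by
      intro i
      rw [hA]
      simp only
      rw [mul_comm (β ^ c₃), mul_assoc, ← Real.rpow_add hβ0]
      congr 2
      push_cast
      ring
    have hcomp : ∀ i : ℕ, ENNReal.ofReal (A (i+2) - A (i+1)) * q (i+1) ≤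
        ENNReal.ofReal (β ^ c₃) * (ENNReal.ofReal (A (i+1)) * q (i+1)) := by
      intro i
      rw [← mul_assoc, ← ENNReal.ofReal_mul (Real.rpow_nonneg hβ0.le _), ← hstep i]
      exact mul_le_mul_left (ENNReal.ofReal_le_ofReal (by linarith [(hApos (i+1)).le])) _
    by_contra hne
    have hfin : ∑' i : ℕ, ENNReal.ofReal (A (i+1)) * q (i+1) < ⊤ := lt_top_iff_ne_top.2 hne
    have : ∑' i : ℕ, ENNReal.ofReal (A (i+2) - A (i+1)) * q (i+1) ≤
        ENNReal.ofReal (β ^ c₃) * ∑' i : ℕ, ENNReal.ofReal (A (i+1)) * q (i+1) := by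
      rw [← ENNReal.tsum_mul_left]
      exact ENNReal.tsum_le_tsum hcomp
    rw [hsum2] at this
    exact absurd (top_le_iff.1 this)
      (ENNReal.mul_ne_top ENNReal.ofReal_ne_top hne)
  -- identical distribution : all preimages have measure q
  have hq : ∀ (j : J) (i : ℕ), P (Y j ⁻¹' Set.Ici (t i)) = q i := by
    intro j i
    rw [(hYident j j₀).measure_mem_eq measurableSet_Ici]
    congr 1
    ext ω
    simp only [Set.mem_preimage, Set.mem_Ici, Set.mem_setOf_eq]
    exact hev j₀ i ω
  -- the index type
  have hLpos : ∀ i : ℕ, 1 ≤ i → (L i).Nonempty := by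
    intro i hi
    rw [← Finset.card_pos]
    have h1 := hL_card i hi
    have h2 : (0:ℝ) < c₂ * β ^ (c₃ * (i:ℝ)) := mul_pos hc₂ (Real.rpow_pos_of_pos hβ0 _)
    exact_mod_cast lt_of_lt_of_le h2 h1
  set K := (i : ℕ) × {j : J // j ∈ L (i+1)} with hK
  haveI : Infinite K := by
    refine Infinite.of_injective
      (fun i : ℕ => (⟨i, ⟨(hLpos (i+1) (by omega)).choose, (hLpos (i+1) (by omega)).choose_spec⟩⟩ : K))
      ?_
    intro a b h
    exact congrArg Sigma.fst h
  obtain ⟨d⟩ := nonempty_denumerable K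
  set e : ℕ ≃ K := (Denumerable.eqv K).symm with he
  set jn : ℕ → J := fun n => ((e n).2 : J) with hjn
  set en : ℕ → ℕ := fun n => (e n).1 + 1 with hen
  have hjn_mem : ∀ n, jn n ∈ L (en n) := fun n => (e n).2.2
  have hKinj : Function.Injective (fun k : K => (k.2 : J)) := by
    rintro ⟨i, j, hj⟩ ⟨i', j', hj'⟩ h
    have hjj : j = j' := h
    have hii : i = i' := by
      by_contra hne
      exact (Finset.disjoint_left.mp (hL_disj (i+1) (i'+1) (by omega))) hj (hjj ▸ hj')
    subst hii
    subst hjj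
    rfl
  have hjninj : Function.Injective jn := by
    intro a b h
    exact e.injective (hKinj h)
  -- events
  set s' : ℕ → Set Ω := fun n => Y (jn n) ⁻¹' Set.Ici (t (en n)) with hs'
  have hs'meas : ∀ n, MeasurableSet (s' n) := fun n => (hYmeas _) measurableSet_Ici
  -- independence
  have hindep : ProbabilityTheory.iIndepSet s' P := by
    rw [ProbabilityTheory.iIndepSet_iff_meas_biInter hs'meas]
    intro S
    set sets : J → Set ℝ := fun j =>
      ⋂ n ∈ S.filter (fun n => jn n = j), Set.Ici (t (en n)) with hsets
    have hfil : ∀ n ∈ S, S.filter (fun m => jn m = jn n) = {n} := by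
      intro n hn
      ext m
      simp only [Finset.mem_filter, Finset.mem_singleton]
      constructor
      · rintro ⟨-, h⟩; exact hjninj h
      · rintro rfl; exact ⟨hn, rfl⟩
    have hsets_eq : ∀ n ∈ S, sets (jn n) = Set.Ici (t (en n)) := by
      intro n hn
      show (⋂ m ∈ S.filter (fun m => jn m = jn n), Set.Ici (t (en m))) = Set.Ici (t (en n))
      rw [hfil n hn]
      simp
    have hmeas_sets : ∀ j ∈ S.image jn, MeasurableSet (sets j) := by
      intro j _
      exact Finset.measurableSet_biInter _ (fun n _ => measurableSet_Ici)
    have hmain := hYindep.measure_inter_preimage_eq_mul (S.image jn) hmeas_sets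
    rw [Finset.set_biInter_finset_image, Finset.prod_image
      (fun x hx y hy h => hjninj h)] at hmain
    calc P (⋂ n ∈ S, s' n) = P (⋂ n ∈ S, Y (jn n) ⁻¹' sets (jn n)) := by
          congr 1
          exact (Set.iInter₂_congr fun n hn => by rw [hsets_eq n hn]).symm
      _ = ∏ n ∈ S, P (Y (jn n) ⁻¹' sets (jn n)) := hmain
      _ = ∏ n ∈ S, P (s' n) := Finset.prod_congr rfl fun n hn => by rw [hsets_eq n hn]
  -- divergence of ∑ P (s' n)
  have hsum : ∑' n : ℕ, P (s' n) = ⊤ := by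
    have h1 : ∑' n : ℕ, P (s' n) =
        ∑' k : K, P (Y (k.2 : J) ⁻¹' Set.Ici (t (k.1 + 1))) :=
      Equiv.tsum_eq e (fun k : K => P (Y (k.2 : J) ⁻¹' Set.Ici (t (k.1 + 1))))
    rw [h1, ENNReal.tsum_sigma']
    have h2 : ∀ i : ℕ, ∑' j : {j : J // j ∈ L (i+1)},
        P (Y (j : J) ⁻¹' Set.Ici (t (i+1))) = ((L (i+1)).card : ℝ≥0∞) * q (i+1) := by
      intro i
      rw [tsum_fintype]
      simp only [hq]
      rw [Finset.sum_const, Finset.card_univ, Fintype.card_coe, nsmul_eq_mul]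
    rw [tsum_congr h2]
    -- compare with hdiv
    have hcard : ∀ i : ℕ, ENNReal.ofReal (c₂ / c ^ r) * (ENNReal.ofReal (A (i+1)) * q (i+1)) ≤
        ((L (i+1)).card : ℝ≥0∞) * q (i+1) := by
      intro i
      rw [← mul_assoc, ← ENNReal.ofReal_mul (by positivity)]
      refine mul_le_mul_left ?_ _
      have h3 : c₂ / c ^ r * A (i+1) = c₂ * β ^ (c₃ * ((i+1 : ℕ) : ℝ)) := by
        rw [hA]
        show c₂ / c ^ r * (c ^ r * β ^ (c₃ * ((i+1 : ℕ) : ℝ))) = _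
        rw [← mul_assoc, div_mul_cancel₀ c₂ (ne_of_gt (Real.rpow_pos_of_pos hc r))]
      calc ENNReal.ofReal (c₂ / c ^ r * A (i+1))
          = ENNReal.ofReal (c₂ * β ^ (c₃ * ((i+1 : ℕ) : ℝ))) := by rw [h3]
        _ ≤ ENNReal.ofReal (((L (i+1)).card : ℝ)) :=
            ENNReal.ofReal_le_ofReal (hL_card (i+1) (by omega))
        _ = ((L (i+1)).card : ℝ≥0∞) := ENNReal.ofReal_natCast _
    have hle : ENNReal.ofReal (c₂ / c ^ r) *
        ∑' i : ℕ, ENNReal.ofReal (A (i+1)) * q (i+1) ≤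
        ∑' i : ℕ, ((L (i+1)).card : ℝ≥0∞) * q (i+1) := by
      rw [← ENNReal.tsum_mul_left]
      exact ENNReal.tsum_le_tsum hcard
    rw [hdiv, ENNReal.mul_top (by
      refine (ENNReal.ofReal_pos.2 ?_).ne'
      positivity)] at hle
    exact top_le_iff.1 hle
  -- second Borel–Cantelli
  have hBC := ProbabilityTheory.measure_limsup_eq_one hs'meas hindep hsum
  have hsub : limsup s' atTop ⊆ {ω | ∃ᶠ i in atTop, t i ≤ M i ω} := by
    intro ω hω
    have hfreq : ∃ᶠ n in atTop, ω ∈ s' n := mem_limsup_iff_frequently_mem.mp hω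
    have hI : {n | ω ∈ s' n}.Infinite := Nat.frequently_atTop_iff_infinite.mp hfreq
    have hfib : ∀ i : ℕ, (en ⁻¹' {i}).Finite := by
      intro i
      have hsubfib : en ⁻¹' {i} ⊆ jn ⁻¹' (L i : Set J) := by
        intro n hn
        simp only [Set.mem_preimage, Set.mem_singleton_iff] at hn
        exact Set.mem_preimage.2 (by rw [← hn]; exact Finset.mem_coe.2 (hjn_mem n))
      exact (Set.Finite.preimage (Function.Injective.injOn hjninj)
        (L i).finite_toSet).subset hsubfib
    have himg : (en '' {n | ω ∈ s' n}).Infinite := by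
      intro hfin
      apply hI
      have hcover : {n | ω ∈ s' n} ⊆ ⋃ i ∈ en '' {n | ω ∈ s' n}, en ⁻¹' {i} := by
        intro n hn
        exact Set.mem_biUnion (Set.mem_image_of_mem en hn) rfl
      exact (hfin.biUnion (fun i _ => hfib i)).subset hcover
    rw [Set.mem_setOf_eq]
    refine Nat.frequently_atTop_iff_infinite.mpr (himg.mono ?_)
    rintro i ⟨n, hn, rfl⟩
    have h1 : t (en n) ≤ Y (jn n) ω := hn
    have h2 := (hM (en n) (Nat.succ_le_succ (Nat.zero_le _)) ω).2
    exact le_trans h1 (h2 ⟨jn n, Finset.mem_coe.2 (hjn_mem n), rfl⟩)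
  refine le_antisymm prob_le_one ?_
  rw [← hBC]
  exact measure_mono hsub
end

section
/- Let (Y_j)_{j∈ℕ} be i.i.d. nonnegative real-valued random variables with E[Y_1] = ∞, and let S_n := Y_1 + ⋯ + Y_n. Then there exists a constant b > 0 such that P(S_n ≤ n) ≤ 2·exp(−n·b) for all n ∈ ℕ. -/
open MeasureTheory
open scoped ENNReal

private lemma exp_neg_le (s : ℝ) (hs : 0 ≤ s) : Real.exp (-s) ≤ 1 - s + s ^ 2 := by
  have h1 : s + 1 ≤ Real.exp s := Real.add_one_le_exp s
  have h2 : (0:ℝ) < 1 + s := by linarith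
  rw [Real.exp_neg]
  have h4 : (Real.exp s)⁻¹ ≤ (1 + s)⁻¹ := by
    apply inv_anti₀ h2; linarith
  refine h4.trans ?_
  rw [inv_le_iff_one_le_mul₀ h2]
  nlinarith

private lemma integrable_of_bound {Ω : Type*} [MeasurableSpace Ω] (P : Measure Ω)
    [IsProbabilityMeasure P] (f : Ω → ℝ) (hf : Measurable f) (C : ℝ)
    (h : ∀ ω, ‖f ω‖ ≤ C) : Integrable f P :=
  Integrable.mono' (integrable_const C) hf.aestronglyMeasurable (ae_of_all _ h)

/-- Cramér bound `cramer`.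
If `(Y j)` are i.i.d. nonnegative real random variables with `E[Y 1] = ∞` and
`S n := Y 1 + ⋯ + Y n`, then there is `b > 0` with `P(S n ≤ n) ≤ 2 exp(−n b)` for all
`n ≥ 1`. -/
theorem stmt9
    {Ω : Type*} [MeasurableSpace Ω] (P : Measure Ω) [IsProbabilityMeasure P]
    (Y : ℕ → Ω → ℝ)
    (hYmeas : ∀ i, Measurable (Y i))
    (hYnonneg : ∀ i ω, 0 ≤ Y i ω)
    (hYindep : ProbabilityTheory.iIndepFun Y P)
    (hYident : ∀ i, ProbabilityTheory.IdentDistrib (Y i) (Y 1) P P)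
    (hinf : ∫⁻ ω, ENNReal.ofReal (Y 1 ω) ∂P = ⊤) :
    ∃ b : ℝ, 0 < b ∧ ∀ n : ℕ, 1 ≤ n →
      P {ω | ∑ j ∈ Finset.Icc 1 n, Y j ω ≤ (n : ℝ)}
        ≤ ENNReal.ofReal (2 * Real.exp (-(n : ℝ) * b)) := by
  classical
  have hmin_meas : ∀ m : ℕ, Measurable (fun ω => min (Y 1 ω) (m : ℝ)) :=
    fun m => (hYmeas 1).min measurable_const
  have hmin_nn : ∀ (m : ℕ) ω, (0:ℝ) ≤ min (Y 1 ω) (m : ℝ) :=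
    fun m ω => le_min (hYnonneg 1 ω) (by positivity)
  have hmin_int : ∀ m : ℕ, Integrable (fun ω => min (Y 1 ω) (m : ℝ)) P := by
    intro m
    refine integrable_of_bound P _ (hmin_meas m) m fun ω => ?_
    rw [Real.norm_eq_abs, abs_le]
    exact ⟨by linarith [hmin_nn m ω], min_le_right _ _⟩
  -- Step 1: find c with E[min(Y,c)] ≥ 3
  obtain ⟨c, hc3⟩ : ∃ c : ℕ, (3:ℝ) ≤ ∫ ω, min (Y 1 ω) (c : ℝ) ∂P := by
    have hsup : (⨆ m : ℕ, ∫⁻ ω, ENNReal.ofReal (min (Y 1 ω) (m : ℝ)) ∂P) = ⊤ := by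
      rw [← lintegral_iSup (fun m => (hmin_meas m).ennreal_ofReal)
        (fun i j hij ω => ENNReal.ofReal_le_ofReal
          (min_le_min le_rfl (by exact_mod_cast hij)))]
      rw [← hinf]
      refine lintegral_congr fun ω => ?_
      apply le_antisymm
      · exact iSup_le fun m => ENNReal.ofReal_le_ofReal (min_le_left _ _)
      · refine le_trans ?_ (le_iSup _ ⌈Y 1 ω⌉₊)
        rw [min_eq_left (Nat.le_ceil _)]
    have h3top : (3:ℝ≥0∞) < ⨆ m : ℕ, ∫⁻ ω, ENNReal.ofReal (min (Y 1 ω) (m : ℝ)) ∂P := by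
      rw [hsup]; exact lt_top_iff_ne_top.mpr (by norm_num)
    obtain ⟨c, hc⟩ := lt_iSup_iff.mp h3top
    refine ⟨c, ?_⟩
    have heq : ENNReal.ofReal (∫ ω, min (Y 1 ω) (c : ℝ) ∂P)
        = ∫⁻ ω, ENNReal.ofReal (min (Y 1 ω) (c : ℝ)) ∂P :=
      ofReal_integral_eq_lintegral_ofReal (hmin_int c) (ae_of_all _ (hmin_nn c))
    have h3 : ENNReal.ofReal 3 ≤ ENNReal.ofReal (∫ ω, min (Y 1 ω) (c : ℝ) ∂P) := by
      rw [heq]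
      calc ENNReal.ofReal 3 = (3:ℝ≥0∞) := by norm_num
        _ ≤ _ := hc.le
    exact (ENNReal.ofReal_le_ofReal_iff (integral_nonneg (hmin_nn c))).mp h3
  have hc1 : (1:ℝ) ≤ (c:ℝ) := by
    by_contra h
    push_neg at h
    have hle : ∫ ω, min (Y 1 ω) (c : ℝ) ∂P ≤ 1 := by
      calc ∫ ω, min (Y 1 ω) (c : ℝ) ∂P ≤ ∫ _, (1:ℝ) ∂P :=
            integral_mono (hmin_int c) (integrable_const 1)
              (fun ω => (min_le_right _ _).trans h.le)
        _ = 1 := by rw [integral_const, probReal_univ]; norm_num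
    linarith
  set t : ℝ := 1 / (c:ℝ) ^ 2 with ht_def
  have hcpos : (0:ℝ) < c := by linarith
  have htpos : 0 < t := by positivity
  have htc : t * (c:ℝ) ^ 2 = 1 := by rw [ht_def]; field_simp
  refine ⟨t, htpos, fun n hn => ?_⟩
  -- single-variable mgf bound
  have hM : ProbabilityTheory.mgf (Y 1) P (-t) ≤ Real.exp (-2 * t) := by
    have hptwise : ∀ ω, Real.exp (-t * Y 1 ω)
        ≤ 1 - t * min (Y 1 ω) (c:ℝ) + t ^ 2 * (c:ℝ) ^ 2 := by
      intro ω
      have hm0 := hmin_nn c ω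
      have hmc := min_le_right (Y 1 ω) (c:ℝ)
      have h1 : Real.exp (-t * Y 1 ω) ≤ Real.exp (-(t * min (Y 1 ω) (c:ℝ))) := by
        apply Real.exp_le_exp.mpr
        nlinarith [min_le_left (Y 1 ω) (c:ℝ)]
      have h2 := exp_neg_le (t * min (Y 1 ω) (c:ℝ)) (mul_nonneg htpos.le hm0)
      have hm2 : min (Y 1 ω) (c:ℝ) * min (Y 1 ω) (c:ℝ) ≤ (c:ℝ) * (c:ℝ) :=
        mul_le_mul hmc hmc hm0 (hm0.trans hmc)
      have h3 : (t * min (Y 1 ω) (c:ℝ)) ^ 2 ≤ t ^ 2 * (c:ℝ) ^ 2 := by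
        nlinarith [mul_le_mul_of_nonneg_left hm2 (sq_nonneg t)]
      linarith [h1.trans h2]
    have hint_exp : Integrable (fun ω => Real.exp (-t * Y 1 ω)) P := by
      refine integrable_of_bound P _ ((hYmeas 1).const_mul (-t)).exp 1 fun ω => ?_
      rw [Real.norm_eq_abs, abs_of_pos (Real.exp_pos _)]
      calc Real.exp (-t * Y 1 ω) ≤ Real.exp 0 :=
            Real.exp_le_exp.mpr (by nlinarith [hYnonneg 1 ω])
        _ = 1 := Real.exp_zero
    have hRHS_int : Integrable
        (fun ω => (1 + t ^ 2 * (c:ℝ) ^ 2) - t * min (Y 1 ω) (c:ℝ)) P :=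
      (integrable_const _).sub ((hmin_int c).const_mul t)
    have hI : ProbabilityTheory.mgf (Y 1) P (-t)
        ≤ 1 - t * ∫ ω, min (Y 1 ω) (c:ℝ) ∂P + t ^ 2 * (c:ℝ) ^ 2 := by
      have hmgf : ProbabilityTheory.mgf (Y 1) P (-t)
          = ∫ ω, Real.exp (-t * Y 1 ω) ∂P := rfl
      rw [hmgf]
      calc ∫ ω, Real.exp (-t * Y 1 ω) ∂P
          ≤ ∫ ω, ((1 + t ^ 2 * (c:ℝ) ^ 2) - t * min (Y 1 ω) (c:ℝ)) ∂P := by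
            refine integral_mono hint_exp hRHS_int fun ω => ?_
            have := hptwise ω; linarith
        _ = 1 - t * ∫ ω, min (Y 1 ω) (c:ℝ) ∂P + t ^ 2 * (c:ℝ) ^ 2 := by
            rw [integral_sub (integrable_const _) ((hmin_int c).const_mul t),
              integral_const_mul, integral_const]
            simp only [probReal_univ, ENNReal.toReal_one, smul_eq_mul, one_mul]
            ring
    have ht2 : t ^ 2 * (c:ℝ) ^ 2 = t := by nlinarith [htc]
    have hfinal : ProbabilityTheory.mgf (Y 1) P (-t) ≤ 1 - 2 * t := by
      have hmono : 1 - t * ∫ ω, min (Y 1 ω) (c:ℝ) ∂P + t ^ 2 * (c:ℝ) ^ 2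
          ≤ 1 - 3 * t + t := by
        rw [ht2]
        have := mul_le_mul_of_nonneg_left hc3 htpos.le
        linarith
      linarith [hI, hmono]
    calc ProbabilityTheory.mgf (Y 1) P (-t) ≤ 1 - 2 * t := hfinal
      _ ≤ Real.exp (-2 * t) := by linarith [Real.add_one_le_exp (-2 * t)]
  -- mgf of sum
  set S : Ω → ℝ := ∑ j ∈ Finset.Icc 1 n, Y j with hS_def
  have hSapp : ∀ ω, S ω = ∑ j ∈ Finset.Icc 1 n, Y j ω := fun ω => by
    simp [hS_def, Finset.sum_apply]
  have hSmeas : Measurable S := by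
    have hfe : S = fun ω => ∑ j ∈ Finset.Icc 1 n, Y j ω := funext hSapp
    rw [hfe]; exact Finset.measurable_sum _ fun j _ => hYmeas j
  have hSnn : ∀ ω, 0 ≤ S ω := fun ω => by
    rw [hSapp]; exact Finset.sum_nonneg fun j _ => hYnonneg j ω
  have hSint : Integrable (fun ω => Real.exp (-t * S ω)) P := by
    refine integrable_of_bound P _ (hSmeas.const_mul (-t)).exp 1 fun ω => ?_
    rw [Real.norm_eq_abs, abs_of_pos (Real.exp_pos _)]
    calc Real.exp (-t * S ω) ≤ Real.exp 0 :=
          Real.exp_le_exp.mpr (by nlinarith [hSnn ω])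
      _ = 1 := Real.exp_zero
  have hcher := ProbabilityTheory.measure_le_le_exp_mul_mgf (μ := P) (X := S)
    (n : ℝ) (t := -t) (neg_nonpos.mpr htpos.le) hSint
  have hmgf_eq : ∀ j : ℕ, ProbabilityTheory.mgf (Y j) P (-t)
      = ProbabilityTheory.mgf (Y 1) P (-t) := by
    intro j
    have := ((hYident j).comp
      (u := fun x : ℝ => Real.exp (-t * x))
      ((measurable_id.const_mul (-t)).exp)).integral_eq
    simpa [Function.comp, ProbabilityTheory.mgf] using this
  have hmgfS : ProbabilityTheory.mgf S P (-t)
      = (ProbabilityTheory.mgf (Y 1) P (-t)) ^ n := by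
    rw [hS_def, hYindep.mgf_sum hYmeas]
    rw [Finset.prod_congr rfl fun j _ => hmgf_eq j, Finset.prod_const,
      Nat.card_Icc]
    simp
  have hMnn : 0 ≤ ProbabilityTheory.mgf (Y 1) P (-t) := ProbabilityTheory.mgf_nonneg
  have hreal : (P {ω | S ω ≤ (n:ℝ)}).toReal ≤ 2 * Real.exp (-(n:ℝ) * t) := by
    calc (P {ω | S ω ≤ (n:ℝ)}).toReal
        ≤ Real.exp (-(-t) * n) * ProbabilityTheory.mgf S P (-t) := hcher
      _ ≤ Real.exp (t * n) * (Real.exp (-2 * t)) ^ n := by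
          rw [hmgfS, neg_neg]
          exact mul_le_mul_of_nonneg_left (pow_le_pow_left₀ hMnn hM n)
            (Real.exp_pos _).le
      _ = Real.exp (t * n + n * (-2 * t)) := by
          rw [← Real.exp_nat_mul, ← Real.exp_add]
      _ ≤ 2 * Real.exp (-(n:ℝ) * t) := by
          have : t * n + n * (-2 * t) = -(n:ℝ) * t := by ring
          rw [this]
          nlinarith [Real.exp_pos (-(n:ℝ) * t)]
  have hset : {ω | ∑ j ∈ Finset.Icc 1 n, Y j ω ≤ (n:ℝ)} = {ω | S ω ≤ (n:ℝ)} := by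
    ext ω; simp [hSapp]
  rw [hset]
  calc P {ω | S ω ≤ (n:ℝ)} = ENNReal.ofReal ((P {ω | S ω ≤ (n:ℝ)}).toReal) := by
        rw [ENNReal.ofReal_toReal (measure_ne_top _ _)]
    _ ≤ ENNReal.ofReal (2 * Real.exp (-(n:ℝ) * t)) := ENNReal.ofReal_le_ofReal hreal
end
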